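/- Let X be a finite-dimensional real normed vector space, let α > 0, let A : X × X → ℝ be a bilinear form with A(v,v) ≥ α‖v‖² for all v ∈ X, let B : X × X × X → ℝ be a trilinear map with B(w,v,v) = 0 for all w, v ∈ X, and let L : X → ℝ be a linear form. Suppose (w̄_n) is a sequence in X with w̄_n → w̄, and for each n the element u_n ∈ X satisfies A(u_n,φ) + B(w̄_n,u_n,φ) = L(φ) for all φ ∈ X, while u ∈ X satisfies A(u,φ) + B(w̄,u,φ) = L(φ) for all φ ∈ X. Then u_n → u in X. -/

import Mathlib

open Filter

/-- Continuity of the fixed-point map: if `wbar_n → wbar` and `u_n` solves the linearized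
problem with datum `wbar_n` while `u` solves it with datum `wbar`, then `u_n → u`. -/
theorem stmt2
    {X : Type*} [NormedAddCommGroup X] [NormedSpace ℝ X] [FiniteDimensional ℝ X]
    (α : ℝ) (hα : 0 < α)
    (A : X →ₗ[ℝ] X →ₗ[ℝ] ℝ)
    (hA : ∀ v : X, α * ‖v‖ ^ 2 ≤ A v v)
    (B : X →ₗ[ℝ] X →ₗ[ℝ] X →ₗ[ℝ] ℝ)
    (hB : ∀ w v : X, B w v v = 0)
    (L : X →ₗ[ℝ] ℝ)
    (wb : ℕ → X) (wbar : X) (hw : Tendsto wb atTop (nhds wbar))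
    (u : ℕ → X) (hu : ∀ (n : ℕ) (φ : X), A (u n) φ + B (wb n) (u n) φ = L φ)
    (ulim : X) (hulim : ∀ φ : X, A ulim φ + B wbar ulim φ = L φ) :
    Tendsto u atTop (nhds ulim) := by
  -- Build the continuous bilinear map (w, e) ↦ B w ulim e and its bound C
  let T : X →ₗ[ℝ] X →L[ℝ] ℝ :=
    (LinearMap.toContinuousLinearMap : (X →ₗ[ℝ] ℝ) ≃ₗ[ℝ] (X →L[ℝ] ℝ)).toLinearMap ∘ₗ
      ((LinearMap.applyₗ ulim) ∘ₗ B)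
  let Tc : X →L[ℝ] X →L[ℝ] ℝ := LinearMap.toContinuousLinearMap T
  set C : ℝ := ‖Tc‖ with hC
  have hCnonneg : 0 ≤ C := hC ▸ norm_nonneg Tc
  have hbound : ∀ w e : X, |B w ulim e| ≤ C * ‖w‖ * ‖e‖ := by
    intro w e
    have h1 : Tc w e = B w ulim e := rfl
    calc |B w ulim e| = ‖Tc w e‖ := by rw [h1]; rfl
      _ ≤ ‖Tc w‖ * ‖e‖ := (Tc w).le_opNorm e
      _ ≤ (C * ‖w‖) * ‖e‖ := by
          gcongr
          exact Tc.le_opNorm w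
      _ = C * ‖w‖ * ‖e‖ := by ring
  -- key estimate
  have key : ∀ n : ℕ, ‖u n - ulim‖ ≤ (C / α) * ‖wb n - wbar‖ := by
    intro n
    set e := u n - ulim with he
    have heq : A e e = -(B (wb n - wbar) ulim e) := by
      have h1 := hu n e
      have h2 := hulim e
      have h3 : A (u n) e + B (wb n) (u n) e = A ulim e + B wbar ulim e := by
        rw [h1, h2]
      have hB1 : B (wb n) (u n) e = B (wb n) e e + B (wb n) ulim e := by
        have : (u n) = e + ulim := by simp [he]
        rw [this]; simp
      rw [hB1, hB (wb n) e] at h3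
      have : A e e = A (u n) e - A ulim e := by simp [he]
      rw [this]
      simp only [map_sub, LinearMap.sub_apply]
      linarith
    have hcoer : α * ‖e‖ ^ 2 ≤ C * ‖wb n - wbar‖ * ‖e‖ := by
      calc α * ‖e‖ ^ 2 ≤ A e e := hA e
        _ = -(B (wb n - wbar) ulim e) := heq
        _ ≤ |B (wb n - wbar) ulim e| := neg_le_abs _
        _ ≤ C * ‖wb n - wbar‖ * ‖e‖ := hbound _ _
    rcases eq_or_lt_of_le (norm_nonneg e) with h0 | h0
    · rw [← h0]
      positivity
    · have : α * ‖e‖ ≤ C * ‖wb n - wbar‖ := by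
        nlinarith [hcoer, h0]
      rw [div_mul_eq_mul_div, le_div_iff₀ hα]
      linarith
  -- conclude by squeeze
  rw [tendsto_iff_norm_sub_tendsto_zero]
  have hw0 : Tendsto (fun n => (C / α) * ‖wb n - wbar‖) atTop (nhds 0) := by
    have := (tendsto_iff_norm_sub_tendsto_zero.mp hw).const_mul (C / α)
    simpa using this
  exact squeeze_zero (fun n => norm_nonneg _) key hw0
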